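/- Let λ ∈ ℂ with Re λ > 0, let f : [0,1] → ℂ be continuous, and fix r₀ ∈ (0,1). Define, for 0 < r < 1, q(r) = e^{−λ∫_{r₀}^r dρ/w(ρ)} · ∫_r^1 (f(η)/w(η)) · e^{λ∫_{r₀}^η dρ/w(ρ)} dη. Then q extends to a continuous function on [0,1], q is continuously differentiable on (0,1) and satisfies −w(r)q'(r) − λ·q(r) = f(r) for all r ∈ (0,1), and sup_{0≤r≤1}|q(r)| ≤ ‖f‖_∞ / Re λ. -/

import Mathlib

open Set MeasureTheory intervalIntegral Filter Topology

noncomputable def s12Phi (w : ℝ → ℝ) (r₀ r : ℝ) : ℝ := ∫ ρ in r₀..r, 1 / w ρ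

lemma s12_inv_cont {w : ℝ → ℝ} (hwc : ContinuousOn w (Icc 0 1))
    (hwneg : ∀ r ∈ Ioo (0:ℝ) 1, w r < 0) :
    ContinuousOn (fun ρ => 1 / w ρ) (Ioo 0 1) :=
  continuousOn_const.div (hwc.mono Ioo_subset_Icc_self) (fun r hr => (hwneg r hr).ne)

lemma s12Phi_hasDeriv {w : ℝ → ℝ} (hwc : ContinuousOn w (Icc 0 1))
    (hwneg : ∀ r ∈ Ioo (0:ℝ) 1, w r < 0) {r₀ : ℝ} (hr₀ : r₀ ∈ Ioo (0:ℝ) 1)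
    {r : ℝ} (hr : r ∈ Ioo (0:ℝ) 1) :
    HasDerivAt (s12Phi w r₀) (1 / w r) r := by
  apply intervalIntegral.integral_hasDerivAt_right
  · exact ((s12_inv_cont hwc hwneg).mono (ordConnected_Ioo.uIcc_subset hr₀ hr)).intervalIntegrable
  · exact (s12_inv_cont hwc hwneg).stronglyMeasurableAtFilter isOpen_Ioo r hr
  · exact (s12_inv_cont hwc hwneg).continuousAt (isOpen_Ioo.mem_nhds hr)

lemma s12Phi_cont {w : ℝ → ℝ} (hwc : ContinuousOn w (Icc 0 1))
    (hwneg : ∀ r ∈ Ioo (0:ℝ) 1, w r < 0) {r₀ : ℝ} (hr₀ : r₀ ∈ Ioo (0:ℝ) 1) :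
    ContinuousOn (s12Phi w r₀) (Ioo 0 1) := fun r hr =>
  ((s12Phi_hasDeriv hwc hwneg hr₀ hr).continuousAt).continuousWithinAt

section
variable {w : ℝ → ℝ} {C₁ : ℝ} {r₀ : ℝ}

lemma s12Phi_lb (hwc : ContinuousOn w (Icc 0 1))
    (hwneg : ∀ r ∈ Ioo (0:ℝ) 1, w r < 0)
    (hC₁ : 0 < C₁) (hw_lb : ∀ r ∈ Icc (0:ℝ) 1, -C₁ * (r * (1 - r)) ≤ w r)
    (hr₀ : r₀ ∈ Ioo (0:ℝ) 1) {r : ℝ} (hr : r ∈ Ioo (0:ℝ) 1) (hrr : r ≤ r₀) :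
    (1/C₁) * Real.log (r₀ / r) ≤ s12Phi w r₀ r := by
  have hsub : Icc r r₀ ⊆ Ioo (0:ℝ) 1 := Icc_subset_Ioo hr.1 hr₀.2
  have h1 : s12Phi w r₀ r = ∫ ρ in r..r₀, -(1 / w ρ) := by
    rw [s12Phi, intervalIntegral.integral_symm, ← intervalIntegral.integral_neg]
  have hcont : ContinuousOn (fun ρ => -(1 / w ρ)) (Icc r r₀) :=
    ((continuousOn_const.div (hwc.mono (hsub.trans Ioo_subset_Icc_self))
      (fun x hx => (hwneg x (hsub hx)).ne)).neg)
  have hcont2 : ContinuousOn (fun ρ => (1/C₁) * (1 / ρ)) (Icc r r₀) :=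
    continuousOn_const.mul (continuousOn_const.div continuousOn_id
      (fun x hx => (hsub hx).1.ne'))
  have hle : ∀ ρ ∈ Icc r r₀, (1/C₁) * (1 / ρ) ≤ -(1 / w ρ) := by
    intro ρ hρ
    have hρ0 : 0 < ρ := (hsub hρ).1
    have hρ1 : ρ < 1 := (hsub hρ).2
    have hwn : w ρ < 0 := hwneg ρ (hsub hρ)
    have hlb := hw_lb ρ ⟨hρ0.le, hρ1.le⟩
    have h2 : -w ρ ≤ C₁ * ρ := by nlinarith
    have e1 : (1/C₁) * (1/ρ) = 1 / (C₁ * ρ) := by field_simp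
    have e2 : -(1 / w ρ) = 1 / (-w ρ) := by ring
    rw [e1, e2]
    exact one_div_le_one_div_of_le (by linarith) h2
  have hmono := intervalIntegral.integral_mono_on hrr
    (hcont2.intervalIntegrable_of_Icc (μ := volume) hrr) (hcont.intervalIntegrable_of_Icc (μ := volume) hrr) hle
  have hcomp : ∫ ρ in r..r₀, (1/C₁) * (1 / ρ) = (1/C₁) * Real.log (r₀ / r) := by
    rw [intervalIntegral.integral_const_mul, integral_one_div]
    intro h
    rcases (Set.mem_uIcc.1 h) with h' | h'
    · exact absurd h'.1 (not_le.2 hr.1)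
    · exact absurd h'.1 (not_le.2 (hr.1.trans_le hrr))
  rw [h1]
  rw [hcomp] at hmono
  exact hmono

lemma s12Phi_ub (hwc : ContinuousOn w (Icc 0 1))
    (hwneg : ∀ r ∈ Ioo (0:ℝ) 1, w r < 0)
    (hC₁ : 0 < C₁) (hw_lb : ∀ r ∈ Icc (0:ℝ) 1, -C₁ * (r * (1 - r)) ≤ w r)
    (hr₀ : r₀ ∈ Ioo (0:ℝ) 1) {r : ℝ} (hr : r ∈ Ioo (0:ℝ) 1) (hrr : r₀ ≤ r) :
    s12Phi w r₀ r ≤ -((1/C₁) * Real.log ((1 - r₀) / (1 - r))) := by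
  have hsub : Icc r₀ r ⊆ Ioo (0:ℝ) 1 := Icc_subset_Ioo hr₀.1 hr.2
  have hcont : ContinuousOn (fun ρ => 1 / w ρ) (Icc r₀ r) :=
    continuousOn_const.div (hwc.mono (hsub.trans Ioo_subset_Icc_self))
      (fun x hx => (hwneg x (hsub hx)).ne)
  have hcont2 : ContinuousOn (fun ρ => -((1/C₁) * (1 / (1 - ρ)))) (Icc r₀ r) :=
    (continuousOn_const.mul (continuousOn_const.div
      (continuousOn_const.sub continuousOn_id)
      (fun x hx => (sub_pos.2 (hsub hx).2).ne'))).neg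
  have hle : ∀ ρ ∈ Icc r₀ r, 1 / w ρ ≤ -((1/C₁) * (1 / (1 - ρ))) := by
    intro ρ hρ
    have hρ0 : 0 < ρ := (hsub hρ).1
    have hρ1 : ρ < 1 := (hsub hρ).2
    have hwn : w ρ < 0 := hwneg ρ (hsub hρ)
    have hlb := hw_lb ρ ⟨hρ0.le, hρ1.le⟩
    have h2 : -w ρ ≤ C₁ * (1 - ρ) := by nlinarith
    have e1 : (1/C₁) * (1/(1-ρ)) = 1 / (C₁ * (1-ρ)) := by field_simp
    have e2 : (1:ℝ) / w ρ = -(1 / (-w ρ)) := by ring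
    rw [e1, e2, neg_le_neg_iff]
    exact one_div_le_one_div_of_le (by nlinarith) h2
  have hmono := intervalIntegral.integral_mono_on hrr
    (hcont.intervalIntegrable_of_Icc (μ := volume) hrr) (hcont2.intervalIntegrable_of_Icc (μ := volume) hrr) hle
  have hcomp : ∫ ρ in r₀..r, -((1/C₁) * (1 / (1 - ρ))) = -((1/C₁) * Real.log ((1 - r₀) / (1 - r))) := by
    rw [intervalIntegral.integral_neg, intervalIntegral.integral_const_mul]
    congr 2
    have := intervalIntegral.integral_comp_sub_left (a := r₀) (b := r) (fun u => 1/u) 1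
    rw [this, integral_one_div]
    intro h
    rcases (Set.mem_uIcc.1 h) with h' | h'
    · exact absurd h'.1 (not_le.2 (sub_pos.2 hr.2))
    · exact absurd h'.1 (not_le.2 (sub_pos.2 ((hsub (left_mem_Icc.2 hrr)).2)))
  rw [hcomp] at hmono
  exact hmono

lemma s12Phi_atTop (hwc : ContinuousOn w (Icc 0 1))
    (hwneg : ∀ r ∈ Ioo (0:ℝ) 1, w r < 0)
    (hC₁ : 0 < C₁) (hw_lb : ∀ r ∈ Icc (0:ℝ) 1, -C₁ * (r * (1 - r)) ≤ w r)
    (hr₀ : r₀ ∈ Ioo (0:ℝ) 1) :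
    Tendsto (s12Phi w r₀) (𝓝[>] (0:ℝ)) atTop := by
  have h1 : Tendsto (fun r : ℝ => (1/C₁) * Real.log (r₀ / r)) (𝓝[>] (0:ℝ)) atTop := by
    apply Tendsto.const_mul_atTop (by positivity)
    apply Real.tendsto_log_atTop.comp
    have : Tendsto (fun r : ℝ => r₀ / r) (𝓝[>] (0:ℝ)) atTop := by
      simp only [div_eq_mul_inv]
      exact Tendsto.const_mul_atTop hr₀.1 tendsto_inv_nhdsGT_zero
    exact this
  apply tendsto_atTop_mono' _ _ h1
  filter_upwards [Ioo_mem_nhdsGT hr₀.1] with r hr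
  exact s12Phi_lb hwc hwneg hC₁ hw_lb hr₀ ⟨hr.1, hr.2.trans hr₀.2⟩ hr.2.le

lemma s12Phi_atBot (hwc : ContinuousOn w (Icc 0 1))
    (hwneg : ∀ r ∈ Ioo (0:ℝ) 1, w r < 0)
    (hC₁ : 0 < C₁) (hw_lb : ∀ r ∈ Icc (0:ℝ) 1, -C₁ * (r * (1 - r)) ≤ w r)
    (hr₀ : r₀ ∈ Ioo (0:ℝ) 1) :
    Tendsto (s12Phi w r₀) (𝓝[<] (1:ℝ)) atBot := by
  have h1 : Tendsto (fun r : ℝ => -((1/C₁) * Real.log ((1 - r₀) / (1 - r)))) (𝓝[<] (1:ℝ)) atBot := by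
    rw [tendsto_neg_atBot_iff]
    apply Tendsto.const_mul_atTop (by positivity)
    apply Real.tendsto_log_atTop.comp
    simp only [div_eq_mul_inv]
    apply Tendsto.const_mul_atTop (sub_pos.2 hr₀.2)
    apply tendsto_inv_nhdsGT_zero.comp
    have hc : Tendsto (fun r : ℝ => 1 - r) (𝓝[<] (1:ℝ)) (𝓝 (0:ℝ)) := by
      have h := ((by continuity : Continuous fun r : ℝ => 1 - r).tendsto (1:ℝ)).mono_left
        (nhdsWithin_le_nhds (s := Iio (1:ℝ)))
      simpa using h
    apply tendsto_nhdsWithin_of_tendsto_nhds_of_eventually_within _ hc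
    filter_upwards [self_mem_nhdsWithin] with r hr
    simpa using sub_pos.2 (mem_Iio.1 hr)
  apply tendsto_atBot_mono' _ _ h1
  filter_upwards [Ioo_mem_nhdsLT hr₀.2] with r hr
  exact s12Phi_ub hwc hwneg hC₁ hw_lb hr₀ ⟨hr₀.1.trans hr.1, hr.2⟩ hr.1.le

noncomputable def s12E (w : ℝ → ℝ) (r₀ : ℝ) (lam : ℂ) (η : ℝ) : ℝ :=
  Real.exp (lam.re * s12Phi w r₀ η)

noncomputable def s12g0 (w : ℝ → ℝ) (r₀ : ℝ) (lam : ℂ) (η : ℝ) : ℝ :=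
  -(1 / w η) * s12E w r₀ lam η

noncomputable def s12g (w : ℝ → ℝ) (r₀ : ℝ) (lam : ℂ) (F : ℝ → ℂ) (η : ℝ) : ℂ :=
  (F η / (w η : ℂ)) * Complex.exp (lam * (s12Phi w r₀ η : ℂ))

section
variable {w : ℝ → ℝ} {C₁ r₀ : ℝ} {lam : ℂ}

/-- extension by zero at 1 is continuous -/
lemma s12_ext {F : Type*} [NormedAddCommGroup F] {g : ℝ → F} {a : ℝ}
    (hg : ∀ x ∈ Ico a (1:ℝ), ContinuousAt g x)
    (hlim : Tendsto g (𝓝[<] (1:ℝ)) (𝓝 0)) :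
    ContinuousOn (fun x => if x < 1 then g x else 0) (Icc a 1) := by
  intro x hx
  rcases lt_or_eq_of_le hx.2 with hx1 | hx1
  · have hev : ∀ᶠ y in 𝓝 x, g y = (if y < 1 then g y else 0) := by
      filter_upwards [Iio_mem_nhds hx1] with y hy
      simp [mem_Iio.1 hy]
    exact ((hg x ⟨hx.1, hx1⟩).congr hev).continuousWithinAt
  · subst hx1
    rw [← continuousWithinAt_diff_self, Icc_sdiff_right, ContinuousWithinAt]
    have hval : (if (1:ℝ) < 1 then g 1 else 0) = 0 := by simp
    rw [hval]
    have h0 : Tendsto (fun y => if y < 1 then g y else 0) (𝓝[<] (1:ℝ)) (𝓝 0) := by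
      apply hlim.congr'
      filter_upwards [self_mem_nhdsWithin] with y hy
      simp [mem_Iio.1 hy]
    exact h0.mono_left (nhdsWithin_mono 1 Ico_subset_Iio_self)

lemma s12E_hasDeriv (hwc : ContinuousOn w (Icc 0 1))
    (hwneg : ∀ r ∈ Ioo (0:ℝ) 1, w r < 0) (hr₀ : r₀ ∈ Ioo (0:ℝ) 1)
    {η : ℝ} (hη : η ∈ Ioo (0:ℝ) 1) :
    HasDerivAt (s12E w r₀ lam) (lam.re * (1 / w η) * s12E w r₀ lam η) η := by
  have h := (((s12Phi_hasDeriv hwc hwneg hr₀ hη).const_mul lam.re).exp)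
  simp only [s12E]
  convert h using 1
  · rfl
  · ring

lemma s12E_pos (η : ℝ) : 0 < s12E w r₀ lam η := Real.exp_pos _

lemma s12E_tendsto (hwc : ContinuousOn w (Icc 0 1))
    (hwneg : ∀ r ∈ Ioo (0:ℝ) 1, w r < 0)
    (hC₁ : 0 < C₁) (hw_lb : ∀ r ∈ Icc (0:ℝ) 1, -C₁ * (r * (1 - r)) ≤ w r)
    (hr₀ : r₀ ∈ Ioo (0:ℝ) 1) (hlam : 0 < lam.re) :
    Tendsto (s12E w r₀ lam) (𝓝[<] (1:ℝ)) (𝓝 0) := by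
  apply Real.tendsto_exp_atBot.comp
  exact Tendsto.const_mul_atBot hlam (s12Phi_atBot hwc hwneg hC₁ hw_lb hr₀)

lemma s12E_cont (hwc : ContinuousOn w (Icc 0 1))
    (hwneg : ∀ r ∈ Ioo (0:ℝ) 1, w r < 0) (hr₀ : r₀ ∈ Ioo (0:ℝ) 1) :
    ContinuousOn (s12E w r₀ lam) (Ioo 0 1) :=
  Real.continuous_exp.comp_continuousOn ((s12Phi_cont hwc hwneg hr₀).const_smul lam.re)

/-- the truncated antiderivative -/
noncomputable def s12G (w : ℝ → ℝ) (r₀ : ℝ) (lam : ℂ) (η : ℝ) : ℝ :=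
  -(1/lam.re) * (if η < 1 then s12E w r₀ lam η else 0)

lemma s12G_cont (hwc : ContinuousOn w (Icc 0 1))
    (hwneg : ∀ r ∈ Ioo (0:ℝ) 1, w r < 0)
    (hC₁ : 0 < C₁) (hw_lb : ∀ r ∈ Icc (0:ℝ) 1, -C₁ * (r * (1 - r)) ≤ w r)
    (hr₀ : r₀ ∈ Ioo (0:ℝ) 1) (hlam : 0 < lam.re) {a : ℝ} (ha : a ∈ Ioo (0:ℝ) 1) :
    ContinuousOn (s12G w r₀ lam) (Icc a 1) := by
  apply continuousOn_const.mul
  apply s12_ext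
  · intro x hx
    exact (s12E_cont hwc hwneg hr₀).continuousAt
      (isOpen_Ioo.mem_nhds ⟨ha.1.trans_le hx.1, hx.2⟩)
  · exact s12E_tendsto hwc hwneg hC₁ hw_lb hr₀ hlam

lemma s12G_hasDeriv (hwc : ContinuousOn w (Icc 0 1))
    (hwneg : ∀ r ∈ Ioo (0:ℝ) 1, w r < 0)
    (hr₀ : r₀ ∈ Ioo (0:ℝ) 1) (hlam : 0 < lam.re)
    {η : ℝ} (hη : η ∈ Ioo (0:ℝ) 1) :
    HasDerivAt (s12G w r₀ lam) (s12g0 w r₀ lam η) η := by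
  have hev : (fun y => -(1/lam.re) * s12E w r₀ lam y) =ᶠ[𝓝 η] s12G w r₀ lam := by
    filter_upwards [Iio_mem_nhds hη.2] with y hy
    simp [s12G, mem_Iio.1 hy]
  have h := ((s12E_hasDeriv hwc hwneg hr₀ hη).const_mul (-(1/lam.re))).congr_of_eventuallyEq
    hev.symm
  have heq : -(1/lam.re) * (lam.re * (1 / w η) * s12E w r₀ lam η) = s12g0 w r₀ lam η := by
    simp only [s12g0]
    field_simp
  rw [← heq]
  exact h

lemma s12g0_nonneg (hwneg : ∀ r ∈ Ioo (0:ℝ) 1, w r < 0)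
    {η : ℝ} (hη : η ∈ Ioo (0:ℝ) 1) : 0 ≤ s12g0 w r₀ lam η := by
  have h0 := hwneg η hη
  have h1 : 0 ≤ -(1 / w η) := by
    simp only [neg_nonneg]
    exact div_nonpos_of_nonneg_of_nonpos zero_le_one h0.le
  simp only [s12g0]
  exact mul_nonneg h1 (s12E_pos η).le

lemma s12_ae_ne_one {s : Set ℝ} : ∀ᵐ t ∂(volume.restrict s), t ≠ (1:ℝ) := by
  apply ae_restrict_of_ae
  rw [MeasureTheory.ae_iff]
  have h : {a : ℝ | ¬ a ≠ 1} = {1} := by ext x; simp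
  rw [h]
  exact Real.volume_singleton

lemma s12g_cont (hwc : ContinuousOn w (Icc 0 1))
    (hwneg : ∀ r ∈ Ioo (0:ℝ) 1, w r < 0) (hr₀ : r₀ ∈ Ioo (0:ℝ) 1)
    {F : ℝ → ℂ} (hF : ContinuousOn F (Icc 0 1)) :
    ContinuousOn (s12g w r₀ lam F) (Ioo 0 1) := by
  apply ContinuousOn.mul
  · exact ContinuousOn.div (hF.mono Ioo_subset_Icc_self)
      (Complex.continuous_ofReal.comp_continuousOn (hwc.mono Ioo_subset_Icc_self))
      (fun x hx => Complex.ofReal_ne_zero.2 (hwneg x hx).ne)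
  · exact Complex.continuous_exp.comp_continuousOn
      (continuousOn_const.mul
        (Complex.continuous_ofReal.comp_continuousOn (s12Phi_cont hwc hwneg hr₀)))

lemma s12g0_intervalIntegrable (hwc : ContinuousOn w (Icc 0 1))
    (hwneg : ∀ r ∈ Ioo (0:ℝ) 1, w r < 0)
    (hC₁ : 0 < C₁) (hw_lb : ∀ r ∈ Icc (0:ℝ) 1, -C₁ * (r * (1 - r)) ≤ w r)
    (hr₀ : r₀ ∈ Ioo (0:ℝ) 1) (hlam : 0 < lam.re)
    {a b : ℝ} (ha : a ∈ Ioo (0:ℝ) 1) (hab : a ≤ b) (hb : b ≤ 1) :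
    IntervalIntegrable (s12g0 w r₀ lam) volume a b := by
  rw [intervalIntegrable_iff_integrableOn_Ioc_of_le hab]
  have h1 : IntegrableOn (s12g0 w r₀ lam) (Ioc a 1) volume :=
    integrableOn_deriv_of_nonneg (s12G_cont hwc hwneg hC₁ hw_lb hr₀ hlam ha)
      (fun x hx => s12G_hasDeriv hwc hwneg hr₀ hlam ⟨ha.1.trans hx.1, hx.2⟩)
      (fun x hx => s12g0_nonneg hwneg ⟨ha.1.trans hx.1, hx.2⟩)
  exact h1.mono_set (Ioc_subset_Ioc_right hb)

lemma s12g0_integral_le (hwc : ContinuousOn w (Icc 0 1))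
    (hwneg : ∀ r ∈ Ioo (0:ℝ) 1, w r < 0)
    (hC₁ : 0 < C₁) (hw_lb : ∀ r ∈ Icc (0:ℝ) 1, -C₁ * (r * (1 - r)) ≤ w r)
    (hr₀ : r₀ ∈ Ioo (0:ℝ) 1) (hlam : 0 < lam.re)
    {a b : ℝ} (ha : a ∈ Ioo (0:ℝ) 1) (hab : a ≤ b) (hb : b ≤ 1) :
    ∫ η in a..b, s12g0 w r₀ lam η ≤ s12E w r₀ lam a / lam.re := by
  have hval : ∫ η in a..b, s12g0 w r₀ lam η = s12G w r₀ lam b - s12G w r₀ lam a := by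
    apply integral_eq_sub_of_hasDeriv_right_of_le hab
      ((s12G_cont hwc hwneg hC₁ hw_lb hr₀ hlam ha).mono (Icc_subset_Icc_right hb))
      (fun x hx => (s12G_hasDeriv hwc hwneg hr₀ hlam
        ⟨ha.1.trans hx.1, hx.2.trans_le hb⟩).hasDerivWithinAt)
      (s12g0_intervalIntegrable hwc hwneg hC₁ hw_lb hr₀ hlam ha hab hb)
  have hGa : s12G w r₀ lam a = -(1/lam.re) * s12E w r₀ lam a := by simp [s12G, ha.2]
  have hGb : s12G w r₀ lam b ≤ 0 := by
    simp only [s12G]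
    split_ifs
    · have := s12E_pos (w := w) (r₀ := r₀) (lam := lam) b
      nlinarith [one_div_pos.2 hlam]
    · simp
  have he : s12E w r₀ lam a / lam.re = (1/lam.re) * s12E w r₀ lam a := by ring
  rw [hval, hGa, he]
  linarith

lemma s12g0_integral_nonneg (hwc : ContinuousOn w (Icc 0 1))
    (hwneg : ∀ r ∈ Ioo (0:ℝ) 1, w r < 0)
    {a b : ℝ} (ha : a ∈ Ioo (0:ℝ) 1) (hab : a ≤ b) (hb : b ≤ 1) :
    0 ≤ ∫ η in a..b, s12g0 w r₀ lam η := by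
  apply intervalIntegral.integral_nonneg_of_ae_restrict hab
  filter_upwards [s12_ae_ne_one, ae_restrict_mem measurableSet_Icc] with t ht htm
  exact s12g0_nonneg hwneg ⟨ha.1.trans_le htm.1, lt_of_le_of_ne (htm.2.trans hb) ht⟩

lemma s12_norm_exp (w : ℝ → ℝ) (r₀ : ℝ) (lam : ℂ) (t : ℝ) :
    ‖Complex.exp (lam * (s12Phi w r₀ t : ℂ))‖ = s12E w r₀ lam t := by
  rw [Complex.norm_exp, s12E]
  congr 1
  simp [Complex.mul_re]

lemma s12g_norm (hwneg : ∀ r ∈ Ioo (0:ℝ) 1, w r < 0) {F : ℝ → ℂ}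
    {t : ℝ} (ht : t ∈ Ioo (0:ℝ) 1) :
    ‖s12g w r₀ lam F t‖ = ‖F t‖ * (1 / (-w t)) * s12E w r₀ lam t := by
  have hwt := hwneg t ht
  have h1 : ‖(w t : ℂ)‖ = -w t := by
    rw [Complex.norm_real]
    exact abs_of_neg hwt
  have h2 : ‖Complex.exp (lam * (s12Phi w r₀ t : ℂ))‖ = s12E w r₀ lam t := by
    rw [Complex.norm_exp, s12E]
    congr 1
    simp [Complex.mul_re]
  simp only [s12g, norm_mul, norm_div, h1, h2]
  ring

lemma s12_key (hwc : ContinuousOn w (Icc 0 1))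
    (hwneg : ∀ r ∈ Ioo (0:ℝ) 1, w r < 0)
    (hC₁ : 0 < C₁) (hw_lb : ∀ r ∈ Icc (0:ℝ) 1, -C₁ * (r * (1 - r)) ≤ w r)
    (hr₀ : r₀ ∈ Ioo (0:ℝ) 1) (hlam : 0 < lam.re)
    {F : ℝ → ℂ} (hF : ContinuousOn F (Icc 0 1))
    {M a b : ℝ} (ha : a ∈ Ioo (0:ℝ) 1) (hab : a ≤ b) (hb : b ≤ 1)
    (hM : ∀ η ∈ Icc a b, ‖F η‖ ≤ M) :
    IntervalIntegrable (s12g w r₀ lam F) volume a b ∧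
      ‖∫ η in a..b, s12g w r₀ lam F η‖ ≤ M * (s12E w r₀ lam a / lam.re) := by
  have hM0 : 0 ≤ M := le_trans (norm_nonneg _) (hM a (left_mem_Icc.2 hab))
  have hpt : ∀ t, t ∈ Icc a b → t ≠ 1 → ‖s12g w r₀ lam F t‖ ≤ M * s12g0 w r₀ lam t := by
    intro t htm ht1
    have htI : t ∈ Ioo (0:ℝ) 1 := ⟨ha.1.trans_le htm.1, lt_of_le_of_ne (htm.2.trans hb) ht1⟩
    have hwt := hwneg t htI
    rw [s12g_norm hwneg htI]
    have hg0 : s12g0 w r₀ lam t = (1 / (-w t)) * s12E w r₀ lam t := by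
      simp only [s12g0, one_div, inv_neg, neg_mul]
    rw [hg0, ← mul_assoc]
    apply mul_le_mul_of_nonneg_right _ (s12E_pos t).le
    exact mul_le_mul_of_nonneg_right (hM t htm) (le_of_lt (one_div_pos.2 (neg_pos.2 hwt)))
  have hint : IntervalIntegrable (s12g w r₀ lam F) volume a b := by
    rw [intervalIntegrable_iff_integrableOn_Ioc_of_le hab]
    apply Integrable.mono'
      (((s12g0_intervalIntegrable hwc hwneg hC₁ hw_lb hr₀ hlam ha hab
        hb).1.const_mul M : IntegrableOn (fun t => M * s12g0 w r₀ lam t) (Ioc a b) volume))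
    · rw [show volume.restrict (Ioc a b) = volume.restrict (Ioo a b) from
        (Measure.restrict_congr_set Ioo_ae_eq_Ioc).symm]
      apply ContinuousOn.aestronglyMeasurable _ measurableSet_Ioo
      exact (s12g_cont hwc hwneg hr₀ hF).mono
        (fun x hx => ⟨ha.1.trans hx.1, hx.2.trans_le hb⟩)
    · filter_upwards [s12_ae_ne_one, ae_restrict_mem measurableSet_Ioc] with t ht htm
      exact hpt t ⟨htm.1.le, htm.2⟩ ht
  refine ⟨hint, ?_⟩
  calc ‖∫ η in a..b, s12g w r₀ lam F η‖
      ≤ |∫ η in a..b, M * s12g0 w r₀ lam η| := by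
        apply intervalIntegral.norm_integral_le_abs_of_norm_le
        · rw [uIoc_of_le hab]
          filter_upwards [s12_ae_ne_one, ae_restrict_mem measurableSet_Ioc] with t ht htm
          exact hpt t ⟨htm.1.le, htm.2⟩ ht
        · exact (s12g0_intervalIntegrable hwc hwneg hC₁ hw_lb hr₀ hlam ha hab hb).const_mul M
    _ = M * ∫ η in a..b, s12g0 w r₀ lam η := by
        rw [intervalIntegral.integral_const_mul]
        exact abs_of_nonneg (mul_nonneg hM0 (s12g0_integral_nonneg hwc hwneg ha hab hb))
    _ ≤ M * (s12E w r₀ lam a / lam.re) :=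
        mul_le_mul_of_nonneg_left
          (s12g0_integral_le hwc hwneg hC₁ hw_lb hr₀ hlam ha hab hb) hM0

lemma s12_exact (hwc : ContinuousOn w (Icc 0 1))
    (hwneg : ∀ r ∈ Ioo (0:ℝ) 1, w r < 0)
    (hC₁ : 0 < C₁) (hw_lb : ∀ r ∈ Icc (0:ℝ) 1, -C₁ * (r * (1 - r)) ≤ w r)
    (hr₀ : r₀ ∈ Ioo (0:ℝ) 1) (hlam : 0 < lam.re)
    {a : ℝ} (ha : a ∈ Ioo (0:ℝ) 1) :
    ∫ η in a..(1:ℝ), s12g w r₀ lam (fun _ => 1) η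
      = -(1/lam) * Complex.exp (lam * (s12Phi w r₀ a : ℂ)) := by
  have hlam0 : lam ≠ 0 := fun h => by simp [h] at hlam
  set Gc : ℝ → ℂ := fun η => if η < 1 then (1/lam) * Complex.exp (lam * (s12Phi w r₀ η : ℂ)) else 0
    with hGc
  have hcont : ContinuousOn Gc (Icc a 1) := by
    apply s12_ext
    · intro x hx
      have hxI : x ∈ Ioo (0:ℝ) 1 := ⟨ha.1.trans_le hx.1, hx.2⟩
      apply ContinuousAt.mul continuousAt_const
      apply Complex.continuous_exp.continuousAt.comp
      apply ContinuousAt.mul continuousAt_const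
      exact Complex.continuous_ofReal.continuousAt.comp
        ((s12Phi_cont hwc hwneg hr₀).continuousAt (isOpen_Ioo.mem_nhds hxI))
    · rw [tendsto_zero_iff_norm_tendsto_zero]
      have heq : ∀ η : ℝ, ‖(1/lam) * Complex.exp (lam * (s12Phi w r₀ η : ℂ))‖
          = ‖(1:ℂ)/lam‖ * s12E w r₀ lam η := by
        intro η
        rw [norm_mul, s12_norm_exp]
      have h0 : Tendsto (fun η => ‖(1:ℂ)/lam‖ * s12E w r₀ lam η) (𝓝[<] (1:ℝ)) (𝓝 0) := by
        have := (s12E_tendsto hwc hwneg hC₁ hw_lb hr₀ hlam).const_mul ‖(1:ℂ)/lam‖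
        simpa using this
      exact h0.congr (fun η => (heq η).symm)
  have hderiv : ∀ x ∈ Ioo a 1, HasDerivWithinAt Gc (s12g w r₀ lam (fun _ => 1) x) (Ioi x) x := by
    intro x hx
    have hxI : x ∈ Ioo (0:ℝ) 1 := ⟨ha.1.trans hx.1, hx.2⟩
    have hwx := hwneg x hxI
    have hd : HasDerivAt (fun η => (1/lam) * Complex.exp (lam * (s12Phi w r₀ η : ℂ)))
        ((1/lam) * (Complex.exp (lam * (s12Phi w r₀ x : ℂ)) * (lam * ((1 / w x : ℝ) : ℂ)))) x :=
      ((((s12Phi_hasDeriv hwc hwneg hr₀ hxI).ofReal_comp).const_mul lam).cexp).const_mul (1/lam)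
    have hval : (1/lam) * (Complex.exp (lam * (s12Phi w r₀ x : ℂ)) * (lam * ((1 / w x : ℝ) : ℂ)))
        = s12g w r₀ lam (fun _ => 1) x := by
      simp only [s12g]
      push_cast
      field_simp
    rw [hval] at hd
    have hev : (fun η => (1/lam) * Complex.exp (lam * (s12Phi w r₀ η : ℂ))) =ᶠ[𝓝 x] Gc := by
      filter_upwards [Iio_mem_nhds hx.2] with y hy
      simp [hGc, mem_Iio.1 hy]
    exact (hd.congr_of_eventuallyEq hev.symm).hasDerivWithinAt
  have hint : IntervalIntegrable (s12g w r₀ lam (fun _ => 1)) volume a 1 :=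
    (s12_key hwc hwneg hC₁ hw_lb hr₀ hlam continuousOn_const (M := 1) ha ha.2.le le_rfl
      (fun η _ => by simp)).1
  have := integral_eq_sub_of_hasDeriv_right_of_le ha.2.le hcont hderiv hint
  rw [this]
  simp [hGc, ha.2]

noncomputable def s12I (w : ℝ → ℝ) (r₀ : ℝ) (lam : ℂ) (f : ℝ → ℂ) (r : ℝ) : ℂ :=
  ∫ η in r..(1:ℝ), s12g w r₀ lam f η

noncomputable def s12q (w : ℝ → ℝ) (r₀ : ℝ) (lam : ℂ) (f : ℝ → ℂ) (r : ℝ) : ℂ :=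
  Complex.exp (-lam * (s12Phi w r₀ r : ℂ)) * s12I w r₀ lam f r

variable {f : ℝ → ℂ}

lemma s12I_hasDeriv (hwc : ContinuousOn w (Icc 0 1))
    (hwneg : ∀ r ∈ Ioo (0:ℝ) 1, w r < 0)
    (hC₁ : 0 < C₁) (hw_lb : ∀ r ∈ Icc (0:ℝ) 1, -C₁ * (r * (1 - r)) ≤ w r)
    (hr₀ : r₀ ∈ Ioo (0:ℝ) 1) (hlam : 0 < lam.re)
    (hf : ContinuousOn f (Icc 0 1)) {r : ℝ} (hr : r ∈ Ioo (0:ℝ) 1) :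
    HasDerivAt (s12I w r₀ lam f) (-(s12g w r₀ lam f r)) r := by
  obtain ⟨M, hM⟩ := isCompact_Icc.exists_bound_of_continuousOn hf
  set a := r/2 with haa
  have ha : a ∈ Ioo (0:ℝ) 1 := ⟨by simp only [haa]; linarith [hr.1], by simp only [haa]; linarith [hr.1, hr.2]⟩
  have har : a < r := by linarith [hr.1]
  have hMs : ∀ s, s ≤ 1 → ∀ η ∈ Icc a s, ‖f η‖ ≤ M := fun s hs η hη =>
    hM η ⟨ha.1.le.trans hη.1, hη.2.trans hs⟩
  have hint1 : ∀ s, a ≤ s → s < 1 → IntervalIntegrable (s12g w r₀ lam f) volume a s :=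
    fun s h1 h2 => (s12_key hwc hwneg hC₁ hw_lb hr₀ hlam hf ha h1 h2.le (hMs s h2.le)).1
  have hplan : ∀ s ∈ Ioo a 1,
      s12I w r₀ lam f s = (∫ η in a..(1:ℝ), s12g w r₀ lam f η) - ∫ η in a..s, s12g w r₀ lam f η := by
    intro s hs
    have hsI : s ∈ Ioo (0:ℝ) 1 := ⟨ha.1.trans hs.1, hs.2⟩
    have h2 : IntervalIntegrable (s12g w r₀ lam f) volume s 1 :=
      (s12_key hwc hwneg hC₁ hw_lb hr₀ hlam hf hsI hsI.2.le le_rfl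
        (fun η hη => hM η ⟨hsI.1.le.trans hη.1, hη.2⟩)).1
    have := intervalIntegral.integral_add_adjacent_intervals (hint1 s hs.1.le hs.2) h2
    simp only [s12I]
    linear_combination this
  have hD : HasDerivAt (fun s => (∫ η in a..(1:ℝ), s12g w r₀ lam f η)
      - ∫ η in a..s, s12g w r₀ lam f η) (-(s12g w r₀ lam f r)) r := by
    apply HasDerivAt.const_sub
    apply intervalIntegral.integral_hasDerivAt_right (hint1 r har.le hr.2)
    · exact (s12g_cont hwc hwneg hr₀ hf).stronglyMeasurableAtFilter isOpen_Ioo _ hr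
    · exact (s12g_cont hwc hwneg hr₀ hf).continuousAt (isOpen_Ioo.mem_nhds hr)
  apply hD.congr_of_eventuallyEq
  filter_upwards [isOpen_Ioo.mem_nhds (show r ∈ Ioo a 1 from ⟨har, hr.2⟩)] with s hs
  exact hplan s hs

lemma s12_exp_prod (z : ℂ) : Complex.exp (-z) * Complex.exp z = 1 := by
  rw [← Complex.exp_add]
  simp

lemma s12q_hasDeriv (hwc : ContinuousOn w (Icc 0 1))
    (hwneg : ∀ r ∈ Ioo (0:ℝ) 1, w r < 0)
    (hC₁ : 0 < C₁) (hw_lb : ∀ r ∈ Icc (0:ℝ) 1, -C₁ * (r * (1 - r)) ≤ w r)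
    (hr₀ : r₀ ∈ Ioo (0:ℝ) 1) (hlam : 0 < lam.re)
    (hf : ContinuousOn f (Icc 0 1)) {r : ℝ} (hr : r ∈ Ioo (0:ℝ) 1) :
    HasDerivAt (s12q w r₀ lam f)
      ((-(lam * s12q w r₀ lam f r) - f r) / (w r : ℂ)) r := by
  have hw0 : (w r : ℂ) ≠ 0 := Complex.ofReal_ne_zero.2 (hwneg r hr).ne
  have h1 : HasDerivAt (fun s => Complex.exp (-lam * (s12Phi w r₀ s : ℂ)))
      (Complex.exp (-lam * (s12Phi w r₀ r : ℂ)) * (-lam * ((1 / w r : ℝ) : ℂ))) r :=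
    (((s12Phi_hasDeriv hwc hwneg hr₀ hr).ofReal_comp).const_mul (-lam)).cexp
  have hmul := h1.mul (s12I_hasDeriv hwc hwneg hC₁ hw_lb hr₀ hlam hf hr)
  have heq : Complex.exp (-lam * (s12Phi w r₀ r : ℂ)) * (-lam * ((1 / w r : ℝ) : ℂ))
        * s12I w r₀ lam f r
      + Complex.exp (-lam * (s12Phi w r₀ r : ℂ)) * -(s12g w r₀ lam f r)
      = (-(lam * s12q w r₀ lam f r) - f r) / (w r : ℂ) := by
    have hexp := s12_exp_prod (lam * (s12Phi w r₀ r : ℂ))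
    simp only [s12q, s12g]
    push_cast
    rw [neg_mul]
    linear_combination (-(f r) / (w r : ℂ)) * hexp
  rw [← heq]
  exact hmul

lemma s12q_bound (hwc : ContinuousOn w (Icc 0 1))
    (hwneg : ∀ r ∈ Ioo (0:ℝ) 1, w r < 0)
    (hC₁ : 0 < C₁) (hw_lb : ∀ r ∈ Icc (0:ℝ) 1, -C₁ * (r * (1 - r)) ≤ w r)
    (hr₀ : r₀ ∈ Ioo (0:ℝ) 1) (hlam : 0 < lam.re)
    {F : ℝ → ℂ} (hF : ContinuousOn F (Icc 0 1))
    {M r : ℝ} (hr : r ∈ Ioo (0:ℝ) 1) (hM : ∀ η ∈ Icc r 1, ‖F η‖ ≤ M) :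
    ‖Complex.exp (-lam * (s12Phi w r₀ r : ℂ))
      * ∫ η in r..(1:ℝ), s12g w r₀ lam F η‖ ≤ M / lam.re := by
  have hkey := (s12_key hwc hwneg hC₁ hw_lb hr₀ hlam hF hr hr.2.le le_rfl hM).2
  have hnorm : ‖Complex.exp (-lam * (s12Phi w r₀ r : ℂ))‖
      = Real.exp (-(lam.re * s12Phi w r₀ r)) := by
    rw [Complex.norm_exp]
    congr 1
    simp [Complex.mul_re]
  rw [norm_mul, hnorm]
  calc Real.exp (-(lam.re * s12Phi w r₀ r)) * ‖∫ η in r..(1:ℝ), s12g w r₀ lam F η‖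
      ≤ Real.exp (-(lam.re * s12Phi w r₀ r)) * (M * (s12E w r₀ lam r / lam.re)) := by
        exact mul_le_mul_of_nonneg_left hkey (Real.exp_pos _).le
    _ = M / lam.re := by
        rw [s12E, Real.exp_neg]
        have := Real.exp_pos (lam.re * s12Phi w r₀ r)
        field_simp

lemma s12q_split (hwc : ContinuousOn w (Icc 0 1))
    (hwneg : ∀ r ∈ Ioo (0:ℝ) 1, w r < 0)
    (hC₁ : 0 < C₁) (hw_lb : ∀ r ∈ Icc (0:ℝ) 1, -C₁ * (r * (1 - r)) ≤ w r)
    (hr₀ : r₀ ∈ Ioo (0:ℝ) 1) (hlam : 0 < lam.re)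
    (hf : ContinuousOn f (Icc 0 1)) (c : ℂ) {r : ℝ} (hr : r ∈ Ioo (0:ℝ) 1) :
    s12q w r₀ lam f r = Complex.exp (-lam * (s12Phi w r₀ r : ℂ))
      * (∫ η in r..(1:ℝ), s12g w r₀ lam (fun η => f η - c) η) - c/lam := by
  obtain ⟨M, hM⟩ := isCompact_Icc.exists_bound_of_continuousOn hf
  have hpt : ∀ η, s12g w r₀ lam f η
      = s12g w r₀ lam (fun η => f η - c) η + c * s12g w r₀ lam (fun _ => 1) η := by
    intro η
    simp only [s12g]
    ring
  have hint2 : IntervalIntegrable (s12g w r₀ lam (fun η => f η - c)) volume r 1 :=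
    (s12_key hwc hwneg hC₁ hw_lb hr₀ hlam (hf.sub continuousOn_const) (M := M + ‖c‖)
      hr hr.2.le le_rfl (fun η hη => le_trans (norm_sub_le _ _)
        (add_le_add_left (hM η ⟨hr.1.le.trans hη.1, hη.2⟩) _))).1
  have hint3 : IntervalIntegrable (fun η => c * s12g w r₀ lam (fun _ => 1) η) volume r 1 :=
    ((s12_key hwc hwneg hC₁ hw_lb hr₀ hlam continuousOn_const (M := 1) hr hr.2.le le_rfl
      (fun η _ => by simp)).1).const_mul c
  have hsplit : s12I w r₀ lam f r
      = (∫ η in r..(1:ℝ), s12g w r₀ lam (fun η => f η - c) η)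
        + c * ∫ η in r..(1:ℝ), s12g w r₀ lam (fun _ => 1) η := by
    rw [s12I]
    rw [intervalIntegral.integral_congr (g := fun η => s12g w r₀ lam (fun η => f η - c) η
      + c * s12g w r₀ lam (fun _ => 1) η) (fun η _ => hpt η)]
    rw [intervalIntegral.integral_add hint2 hint3, intervalIntegral.integral_const_mul]
  rw [s12q, hsplit, s12_exact hwc hwneg hC₁ hw_lb hr₀ hlam hr]
  have hexp := s12_exp_prod (lam * (s12Phi w r₀ r : ℂ))
  rw [neg_mul]
  linear_combination (-c / lam) * hexp

lemma s12_norm_expNeg (w : ℝ → ℝ) (r₀ : ℝ) (lam : ℂ) (r : ℝ) :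
    ‖Complex.exp (-lam * (s12Phi w r₀ r : ℂ))‖ = Real.exp (-(lam.re * s12Phi w r₀ r)) := by
  rw [Complex.norm_exp]
  congr 1
  simp [Complex.mul_re]

lemma s12_wbound (hwc : ContinuousOn w (Icc 0 1))
    (hwneg : ∀ r ∈ Ioo (0:ℝ) 1, w r < 0)
    (hC₁ : 0 < C₁) (hw_lb : ∀ r ∈ Icc (0:ℝ) 1, -C₁ * (r * (1 - r)) ≤ w r)
    (hr₀ : r₀ ∈ Ioo (0:ℝ) 1) (hlam : 0 < lam.re)
    {F : ℝ → ℂ} (hF : ContinuousOn F (Icc 0 1))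
    {M r b : ℝ} (hr : r ∈ Ioo (0:ℝ) 1) (hrb : r ≤ b) (hb : b ≤ 1)
    (hM : ∀ η ∈ Icc r b, ‖F η‖ ≤ M) :
    ‖Complex.exp (-lam * (s12Phi w r₀ r : ℂ))
      * ∫ η in r..b, s12g w r₀ lam F η‖ ≤ M / lam.re := by
  have hkey := (s12_key hwc hwneg hC₁ hw_lb hr₀ hlam hF hr hrb hb hM).2
  rw [norm_mul, s12_norm_expNeg]
  calc Real.exp (-(lam.re * s12Phi w r₀ r)) * ‖∫ η in r..b, s12g w r₀ lam F η‖
      ≤ Real.exp (-(lam.re * s12Phi w r₀ r)) * (M * (s12E w r₀ lam r / lam.re)) :=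
        mul_le_mul_of_nonneg_left hkey (Real.exp_pos _).le
    _ = M / lam.re := by
        rw [s12E, Real.exp_neg]
        have := Real.exp_pos (lam.re * s12Phi w r₀ r)
        field_simp

lemma s12q_tendsto_one (hwc : ContinuousOn w (Icc 0 1))
    (hwneg : ∀ r ∈ Ioo (0:ℝ) 1, w r < 0)
    (hC₁ : 0 < C₁) (hw_lb : ∀ r ∈ Icc (0:ℝ) 1, -C₁ * (r * (1 - r)) ≤ w r)
    (hr₀ : r₀ ∈ Ioo (0:ℝ) 1) (hlam : 0 < lam.re)
    (hf : ContinuousOn f (Icc 0 1)) :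
    Tendsto (s12q w r₀ lam f) (𝓝[Ioo (0:ℝ) 1] 1) (𝓝 (-(f 1)/lam)) := by
  rw [Metric.tendsto_nhds]
  intro ε hε
  have hε' : 0 < ε * lam.re / 2 := by positivity
  obtain ⟨δ, hδ0, hδ⟩ := Metric.continuousWithinAt_iff.1 (hf 1 (right_mem_Icc.2 zero_le_one))
    (ε * lam.re / 2) hε'
  have hev1 : ∀ᶠ r in 𝓝[Ioo (0:ℝ) 1] 1, r ∈ Ioo (0:ℝ) 1 := self_mem_nhdsWithin
  have hev2 : ∀ᶠ r in 𝓝[Ioo (0:ℝ) 1] 1, (1:ℝ) - δ < r :=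
    (eventually_gt_nhds (by linarith : (1:ℝ) - δ < 1)).filter_mono nhdsWithin_le_nhds
  filter_upwards [hev1, hev2] with r hrI hrd
  have hsplit := s12q_split hwc hwneg hC₁ hw_lb hr₀ hlam hf (f 1) hrI
  have hMb : ∀ η ∈ Icc r 1, ‖f η - f 1‖ ≤ ε * lam.re / 2 := by
    intro η hη
    have hη1 : η ∈ Icc (0:ℝ) 1 := ⟨hrI.1.le.trans hη.1, hη.2⟩
    have hd : dist η 1 < δ := by
      rw [Real.dist_eq, abs_of_nonpos (by linarith [hη.2])]
      linarith [hη.1]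
    have h := hδ hη1 hd
    rw [dist_eq_norm] at h
    exact h.le
  have hb := s12_wbound hwc hwneg hC₁ hw_lb hr₀ hlam (hf.sub continuousOn_const)
    hrI hrI.2.le le_rfl hMb
  rw [dist_eq_norm, hsplit]
  have heq : Complex.exp (-lam * (s12Phi w r₀ r : ℂ))
      * (∫ η in r..(1:ℝ), s12g w r₀ lam (fun η => f η - f 1) η) - f 1/lam - -(f 1)/lam
      = Complex.exp (-lam * (s12Phi w r₀ r : ℂ))
      * (∫ η in r..(1:ℝ), s12g w r₀ lam (fun η => f η - f 1) η) := by ring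
  rw [heq]
  calc ‖Complex.exp (-lam * (s12Phi w r₀ r : ℂ))
      * ∫ η in r..(1:ℝ), s12g w r₀ lam (fun η => f η - f 1) η‖
      ≤ (ε * lam.re / 2) / lam.re := hb
    _ = ε / 2 := by field_simp
    _ < ε := by linarith

lemma s12_exp_tendsto_zero (hwc : ContinuousOn w (Icc 0 1))
    (hwneg : ∀ r ∈ Ioo (0:ℝ) 1, w r < 0)
    (hC₁ : 0 < C₁) (hw_lb : ∀ r ∈ Icc (0:ℝ) 1, -C₁ * (r * (1 - r)) ≤ w r)
    (hr₀ : r₀ ∈ Ioo (0:ℝ) 1) (hlam : 0 < lam.re) :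
    Tendsto (fun r => Real.exp (-(lam.re * s12Phi w r₀ r))) (𝓝[>] (0:ℝ)) (𝓝 0) := by
  apply Real.tendsto_exp_atBot.comp
  apply tendsto_neg_atTop_atBot.comp
  exact Tendsto.const_mul_atTop hlam (s12Phi_atTop hwc hwneg hC₁ hw_lb hr₀)

lemma s12q_tendsto_zero (hwc : ContinuousOn w (Icc 0 1))
    (hwneg : ∀ r ∈ Ioo (0:ℝ) 1, w r < 0)
    (hC₁ : 0 < C₁) (hw_lb : ∀ r ∈ Icc (0:ℝ) 1, -C₁ * (r * (1 - r)) ≤ w r)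
    (hr₀ : r₀ ∈ Ioo (0:ℝ) 1) (hlam : 0 < lam.re)
    (hf : ContinuousOn f (Icc 0 1)) :
    Tendsto (s12q w r₀ lam f) (𝓝[Ioo (0:ℝ) 1] 0) (𝓝 (-(f 0)/lam)) := by
  obtain ⟨M₀, hM₀⟩ := isCompact_Icc.exists_bound_of_continuousOn hf
  set Mb := M₀ + ‖f 0‖ with hMbdef
  have hMb : ∀ η ∈ Icc (0:ℝ) 1, ‖f η - f 0‖ ≤ Mb :=
    fun η hη => le_trans (norm_sub_le _ _) (add_le_add_left (hM₀ η hη) _)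
  rw [Metric.tendsto_nhds]
  intro ε hε
  have hε' : 0 < ε * lam.re / 4 := by positivity
  obtain ⟨δ₀, hδ₀, hδ⟩ := Metric.continuousWithinAt_iff.1 (hf 0 (left_mem_Icc.2 zero_le_one))
    (ε * lam.re / 4) hε'
  set δ := min (δ₀/2) (1/2 : ℝ) with hδdef
  have hδI : δ ∈ Ioo (0:ℝ) 1 := ⟨lt_min (by linarith) (by norm_num), by
    apply lt_of_le_of_lt (min_le_right _ _); norm_num⟩
  have hsmall : Tendsto (fun r => Mb * (s12E w r₀ lam δ / lam.re)
      * Real.exp (-(lam.re * s12Phi w r₀ r))) (𝓝[Ioo (0:ℝ) 1] 0) (𝓝 0) := by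
    have h := ((s12_exp_tendsto_zero hwc hwneg hC₁ hw_lb hr₀ hlam).const_mul
      (Mb * (s12E w r₀ lam δ / lam.re))).mono_left
      (nhdsWithin_mono 0 (Ioo_subset_Ioi_self : Ioo (0:ℝ) 1 ⊆ Ioi 0))
    simpa using h
  have hev3 : ∀ᶠ r in 𝓝[Ioo (0:ℝ) 1] 0, Mb * (s12E w r₀ lam δ / lam.re)
      * Real.exp (-(lam.re * s12Phi w r₀ r)) < ε/2 :=
    hsmall.eventually_lt_const (by linarith : (0:ℝ) < ε/2)
  have hev1 : ∀ᶠ r in 𝓝[Ioo (0:ℝ) 1] 0, r ∈ Ioo (0:ℝ) 1 := self_mem_nhdsWithin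
  have hev2 : ∀ᶠ r in 𝓝[Ioo (0:ℝ) 1] 0, r < δ :=
    (eventually_lt_nhds hδI.1).filter_mono nhdsWithin_le_nhds
  filter_upwards [hev1, hev2, hev3] with r hrI hrδ hrsmall
  have hsplitc := s12q_split hwc hwneg hC₁ hw_lb hr₀ hlam hf (f 0) hrI
  have hM1 : ∀ η ∈ Icc r δ, ‖f η - f 0‖ ≤ ε * lam.re / 4 := by
    intro η hη
    have hη1 : η ∈ Icc (0:ℝ) 1 := ⟨hrI.1.le.trans hη.1, hη.2.trans hδI.2.le⟩
    have hd : dist η 0 < δ₀ := by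
      rw [Real.dist_eq, sub_zero, abs_of_nonneg hη1.1]
      have h1 : δ ≤ δ₀ / 2 := min_le_left _ _
      linarith [hη.2]
    have h := hδ hη1 hd
    rw [dist_eq_norm] at h
    exact h.le
  have h1 : IntervalIntegrable (s12g w r₀ lam (fun η => f η - f 0)) volume r δ :=
    (s12_key hwc hwneg hC₁ hw_lb hr₀ hlam (hf.sub continuousOn_const)
      hrI hrδ.le hδI.2.le hM1).1
  have h2 : IntervalIntegrable (s12g w r₀ lam (fun η => f η - f 0)) volume δ 1 :=
    (s12_key hwc hwneg hC₁ hw_lb hr₀ hlam (hf.sub continuousOn_const)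
      hδI hδI.2.le le_rfl (fun η hη => hMb η ⟨hδI.1.le.trans hη.1, hη.2⟩)).1
  have hadd : (∫ η in r..(1:ℝ), s12g w r₀ lam (fun η => f η - f 0) η)
      = (∫ η in r..δ, s12g w r₀ lam (fun η => f η - f 0) η)
        + ∫ η in δ..(1:ℝ), s12g w r₀ lam (fun η => f η - f 0) η :=
    (intervalIntegral.integral_add_adjacent_intervals h1 h2).symm
  rw [dist_eq_norm, hsplitc]
  have heq : Complex.exp (-lam * (s12Phi w r₀ r : ℂ))
      * (∫ η in r..(1:ℝ), s12g w r₀ lam (fun η => f η - f 0) η) - f 0/lam - -(f 0)/lam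
      = Complex.exp (-lam * (s12Phi w r₀ r : ℂ))
        * (∫ η in r..δ, s12g w r₀ lam (fun η => f η - f 0) η)
      + Complex.exp (-lam * (s12Phi w r₀ r : ℂ))
        * (∫ η in δ..(1:ℝ), s12g w r₀ lam (fun η => f η - f 0) η) := by
    rw [hadd]; ring
  rw [heq]
  have hb1 : ‖Complex.exp (-lam * (s12Phi w r₀ r : ℂ))
      * (∫ η in r..δ, s12g w r₀ lam (fun η => f η - f 0) η)‖ ≤ (ε * lam.re / 4) / lam.re :=
    s12_wbound hwc hwneg hC₁ hw_lb hr₀ hlam (hf.sub continuousOn_const)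
      hrI hrδ.le hδI.2.le hM1
  have hb2 : ‖Complex.exp (-lam * (s12Phi w r₀ r : ℂ))
      * (∫ η in δ..(1:ℝ), s12g w r₀ lam (fun η => f η - f 0) η)‖
      ≤ Mb * (s12E w r₀ lam δ / lam.re) * Real.exp (-(lam.re * s12Phi w r₀ r)) := by
    rw [norm_mul, s12_norm_expNeg]
    have hkey := (s12_key hwc hwneg hC₁ hw_lb hr₀ hlam (hf.sub continuousOn_const)
      hδI hδI.2.le le_rfl (fun η hη => hMb η ⟨hδI.1.le.trans hη.1, hη.2⟩)).2
    calc Real.exp (-(lam.re * s12Phi w r₀ r))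
        * ‖∫ η in δ..(1:ℝ), s12g w r₀ lam (fun η => f η - f 0) η‖
        ≤ Real.exp (-(lam.re * s12Phi w r₀ r)) * (Mb * (s12E w r₀ lam δ / lam.re)) :=
          mul_le_mul_of_nonneg_left hkey (Real.exp_pos _).le
      _ = Mb * (s12E w r₀ lam δ / lam.re) * Real.exp (-(lam.re * s12Phi w r₀ r)) := by ring
  calc ‖Complex.exp (-lam * (s12Phi w r₀ r : ℂ))
        * (∫ η in r..δ, s12g w r₀ lam (fun η => f η - f 0) η)
      + Complex.exp (-lam * (s12Phi w r₀ r : ℂ))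
        * (∫ η in δ..(1:ℝ), s12g w r₀ lam (fun η => f η - f 0) η)‖
      ≤ ‖Complex.exp (-lam * (s12Phi w r₀ r : ℂ))
        * (∫ η in r..δ, s12g w r₀ lam (fun η => f η - f 0) η)‖
      + ‖Complex.exp (-lam * (s12Phi w r₀ r : ℂ))
        * (∫ η in δ..(1:ℝ), s12g w r₀ lam (fun η => f η - f 0) η)‖ := norm_add_le _ _
    _ < (ε * lam.re / 4) / lam.re + ε/2 := by
        apply add_lt_add_of_le_of_lt hb1 (lt_of_le_of_lt hb2 hrsmall)
    _ = ε/4 + ε/2 := by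
        congr 1
        field_simp
    _ < ε := by linarith

end

/- STATEMENT 12: Let Re λ > 0, f : [0,1] → ℂ continuous, r₀ ∈ (0,1). Define on (0,1)
q(r) = e^{−λ∫_{r₀}^r dρ/w(ρ)} · ∫_r^1 (f(η)/w(η)) e^{λ∫_{r₀}^η dρ/w(ρ)} dη.
Then q extends continuously to [0,1], is continuously differentiable on (0,1),
satisfies −w q' − λ q = f on (0,1), and sup_{[0,1]}|q| ≤ ‖f‖_∞ / Re λ. -/
theorem stmt_12
    (w : ℝ → ℝ) (C₁ C₂ : ℝ) (hC₁ : 0 < C₁) (hC₂ : 0 < C₂)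
    (hw : ContDiffOn ℝ 1 w (Set.Icc 0 1))
    (hw_lb : ∀ r ∈ Set.Icc (0:ℝ) 1, -C₁ * (r * (1 - r)) ≤ w r)
    (hw_ub : ∀ r ∈ Set.Icc (0:ℝ) 1, w r ≤ -C₂ * (r * (1 - r)))
    (lam : ℂ) (hlam : 0 < lam.re)
    (f : ℝ → ℂ) (hf : ContinuousOn f (Set.Icc 0 1))
    (r₀ : ℝ) (hr₀ : r₀ ∈ Set.Ioo (0:ℝ) 1)
    (q : ℝ → ℂ)
    (hq : ∀ r ∈ Set.Ioo (0:ℝ) 1,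
      q r = Complex.exp (-lam * ((∫ ρ in r₀..r, 1 / w ρ : ℝ) : ℂ)) *
        ∫ η in r..(1:ℝ),
          (f η / (w η : ℂ)) * Complex.exp (lam * ((∫ ρ in r₀..η, 1 / w ρ : ℝ) : ℂ))) :
    ∃ Q Q' : ℝ → ℂ,
      ContinuousOn Q (Set.Icc 0 1) ∧
      Set.EqOn Q q (Set.Ioo 0 1) ∧
      (∀ r ∈ Set.Ioo (0:ℝ) 1, HasDerivAt Q (Q' r) r) ∧
      ContinuousOn Q' (Set.Ioo 0 1) ∧
      (∀ r ∈ Set.Ioo (0:ℝ) 1, -(w r : ℂ) * Q' r - lam * Q r = f r) ∧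
      ∀ Nf : ℝ, (∀ r ∈ Set.Icc (0:ℝ) 1, ‖f r‖ ≤ Nf) →
        ∀ r ∈ Set.Icc (0:ℝ) 1, ‖Q r‖ ≤ Nf / lam.re := by
  have hwc : ContinuousOn w (Icc 0 1) := hw.continuousOn
  have hwneg : ∀ r ∈ Ioo (0:ℝ) 1, w r < 0 := fun r hr =>
    lt_of_le_of_lt (hw_ub r ⟨hr.1.le, hr.2.le⟩)
      (by have h := mul_pos hr.1 (sub_pos.2 hr.2); nlinarith)
  set Q : ℝ → ℂ := fun r => if r ∈ Ioo (0:ℝ) 1 then s12q w r₀ lam f r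
    else (if r ≤ 0 then -(f 0)/lam else -(f 1)/lam) with hQdef
  set Q' : ℝ → ℂ := fun r => (-(lam * Q r) - f r) / (w r : ℂ) with hQ'def
  have hQeq : ∀ r ∈ Ioo (0:ℝ) 1, Q r = s12q w r₀ lam f r := by
    intro r hr
    show (if r ∈ Ioo (0:ℝ) 1 then s12q w r₀ lam f r
      else (if r ≤ 0 then -(f 0)/lam else -(f 1)/lam)) = s12q w r₀ lam f r
    rw [if_pos hr]
  have hqeq : ∀ r ∈ Ioo (0:ℝ) 1, s12q w r₀ lam f r = q r := by
    intro r hr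
    simp only [s12q, s12I, s12g, s12Phi]
    exact (hq r hr).symm
  have hQev : ∀ r ∈ Ioo (0:ℝ) 1, Q =ᶠ[𝓝 r] s12q w r₀ lam f := by
    intro r hr
    filter_upwards [isOpen_Ioo.mem_nhds hr] with y hy
    exact hQeq y hy
  have hQ0 : Q 0 = -(f 0)/lam := by simp [hQdef]
  have hQ1 : Q 1 = -(f 1)/lam := by norm_num [hQdef]
  have hQderiv : ∀ r ∈ Ioo (0:ℝ) 1, HasDerivAt Q (Q' r) r := by
    intro r hr
    show HasDerivAt Q ((-(lam * Q r) - f r) / (w r : ℂ)) r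
    rw [hQeq r hr]
    exact (s12q_hasDeriv hwc hwneg hC₁ hw_lb hr₀ hlam hf hr).congr_of_eventuallyEq
      (hQev r hr)
  have hQcont : ContinuousOn Q (Icc 0 1) := by
    intro x hx
    rcases eq_or_lt_of_le hx.1 with h0 | h0
    · -- x = 0
      subst h0
      rw [← continuousWithinAt_diff_self, Icc_diff_left, ContinuousWithinAt, hQ0]
      have hfe : 𝓝[Ioc (0:ℝ) 1] (0:ℝ) = 𝓝[Ioo (0:ℝ) 1] (0:ℝ) := by
        apply nhdsWithin_eq_iff_eventuallyEq.mpr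
        rw [Filter.eventuallyEq_set]
        filter_upwards [Iio_mem_nhds one_pos] with y hy
        simp only [mem_Ioc, mem_Ioo]
        exact ⟨fun h => ⟨h.1, mem_Iio.1 hy⟩, fun h => ⟨h.1, h.2.le⟩⟩
      rw [hfe]
      apply (s12q_tendsto_zero hwc hwneg hC₁ hw_lb hr₀ hlam hf).congr'
      filter_upwards [self_mem_nhdsWithin] with y hy
      exact (hQeq y hy).symm
    rcases eq_or_lt_of_le hx.2 with h1 | h1
    · -- x = 1
      rw [h1]
      rw [← continuousWithinAt_diff_self, Icc_sdiff_right, ContinuousWithinAt, hQ1]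
      have hfe : 𝓝[Ico (0:ℝ) 1] (1:ℝ) = 𝓝[Ioo (0:ℝ) 1] (1:ℝ) := by
        apply nhdsWithin_eq_iff_eventuallyEq.mpr
        rw [Filter.eventuallyEq_set]
        filter_upwards [Ioi_mem_nhds one_pos] with y hy
        simp only [mem_Ico, mem_Ioo]
        exact ⟨fun h => ⟨mem_Ioi.1 hy, h.2⟩, fun h => ⟨h.1.le, h.2⟩⟩
      rw [hfe]
      apply (s12q_tendsto_one hwc hwneg hC₁ hw_lb hr₀ hlam hf).congr'
      filter_upwards [self_mem_nhdsWithin] with y hy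
      exact (hQeq y hy).symm
    · -- interior
      have hxI : x ∈ Ioo (0:ℝ) 1 := ⟨h0, h1⟩
      exact (((s12q_hasDeriv hwc hwneg hC₁ hw_lb hr₀ hlam hf
        hxI).continuousAt).congr (hQev x hxI).symm).continuousWithinAt
  refine ⟨Q, Q', hQcont, ?_, hQderiv, ?_, ?_, ?_⟩
  · exact fun r hr => (hQeq r hr).trans (hqeq r hr)
  · -- ContinuousOn Q' (Ioo 0 1)
    apply ContinuousOn.div
    · exact ((continuousOn_const.mul (hQcont.mono Ioo_subset_Icc_self)).neg).sub
        (hf.mono Ioo_subset_Icc_self)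
    · exact Complex.continuous_ofReal.comp_continuousOn (hwc.mono Ioo_subset_Icc_self)
    · exact fun r hr => Complex.ofReal_ne_zero.2 (hwneg r hr).ne
  · -- ODE
    intro r hr
    have hw0 : (w r : ℂ) ≠ 0 := Complex.ofReal_ne_zero.2 (hwneg r hr).ne
    show -(w r : ℂ) * ((-(lam * Q r) - f r) / (w r : ℂ)) - lam * Q r = f r
    field_simp
    ring
  · -- bound
    intro Nf hNf r hr
    have hNf0 : 0 ≤ Nf := le_trans (norm_nonneg _) (hNf 0 (left_mem_Icc.2 zero_le_one))
    have hre : lam.re ≤ ‖lam‖ := by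
      exact Complex.re_le_norm lam
    by_cases hxI : r ∈ Ioo (0:ℝ) 1
    · rw [hQeq r hxI]
      have hb := s12q_bound hwc hwneg hC₁ hw_lb hr₀ hlam hf hxI
        (fun η hη => hNf η ⟨hxI.1.le.trans hη.1, hη.2⟩)
      simpa [s12q, s12I] using hb
    · have : r = 0 ∨ r = 1 := by
        rcases eq_or_lt_of_le hr.1 with h0 | h0
        · exact Or.inl h0.symm
        rcases eq_or_lt_of_le hr.2 with h1 | h1
        · exact Or.inr h1
        · exact absurd ⟨h0, h1⟩ hxI
      rcases this with h | h <;> subst h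
      · rw [hQ0]
        rw [norm_div, norm_neg]
        exact div_le_div₀ hNf0 (hNf 0 (left_mem_Icc.2 zero_le_one)) hlam hre
      · rw [hQ1]
        rw [norm_div, norm_neg]
        exact div_le_div₀ hNf0 (hNf 1 (right_mem_Icc.2 zero_le_one)) hlam hre
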